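/- Let G = C₃ × C₃. For any two generating pairs (x₁,y₁) and (x₂,y₂) of G, the intersection Σ(x₁,y₁) ∩ Σ(x₂,y₂) contains a non-identity element. In particular, C₃ × C₃ is not a Beauville group. -/
import Mathlib


def ASigma {G : Type*} [AddCommGroup G] (x y : G) : Set G :=
  (AddSubgroup.zmultiples x : Set G) ∪ (AddSubgroup.zmultiples y : Set G) ∪
    (AddSubgroup.zmultiples (x + y) : Set G)

private abbrev G3 := ZMod 3 × ZMod 3

private lemma three_smul' (x : G3) : x + (x + x) = 0 := by revert x; decide

private lemma zsmul_reduce (n : ℤ) (x : G3) : n • x = 0 ∨ n • x = x ∨ n • x = x + x := by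
  have h3 : (3 : ℤ) • x = 0 := by
    have h : (3 : ℤ) = 1 + 1 + 1 := by norm_num
    rw [h, add_smul, add_smul, one_smul, add_assoc]
    exact three_smul' x
  have key : n • x = (n % 3) • x := by
    conv_lhs => rw [← Int.emod_add_mul_ediv n 3]
    rw [add_smul, mul_comm, mul_smul, h3, smul_zero, add_zero]
  have h0 : 0 ≤ n % 3 := Int.emod_nonneg n (by norm_num)
  have h1 : n % 3 < 3 := Int.emod_lt_of_pos n (by norm_num)
  interval_cases h : n % 3
  · left; rw [key]; exact zero_smul _ _
  · right; left; rw [key]; exact one_smul _ _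
  · right; right; rw [key]; exact two_smul _ _

private def genP (x y : G3) : Prop :=
  ∀ g : G3, ∃ p ∈ ({0, x, x + x} : Finset G3), ∃ q ∈ ({0, y, y + y} : Finset G3), g = p + q

private instance (x y : G3) : Decidable (genP x y) := by unfold genP; infer_instance

private lemma genP_of_closure {x y : G3} (h : AddSubgroup.closure {x, y} = ⊤) : genP x y := by
  intro g
  have hg : g ∈ AddSubgroup.closure ({x, y} : Set G3) := h ▸ AddSubgroup.mem_top g
  rw [AddSubgroup.mem_closure_pair] at hg
  obtain ⟨m, n, hmn⟩ := hg
  rcases zsmul_reduce m x with h1 | h1 | h1 <;> rcases zsmul_reduce n y with h2 | h2 | h2 <;>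
    exact ⟨m • x, by simp [h1], n • y, by simp [h2], hmn.symm⟩

private def bodyP (x₁ y₁ x₂ y₂ : G3) : Prop :=
  genP x₁ y₁ → genP x₂ y₂ →
    ∃ g : G3, g ≠ 0 ∧
      (g = x₁ ∨ g = x₁ + x₁ ∨ g = y₁ ∨ g = y₁ + y₁ ∨ g = x₁ + y₁ ∨ g = (x₁ + y₁) + (x₁ + y₁)) ∧
      (g = x₂ ∨ g = x₂ + x₂ ∨ g = y₂ ∨ g = y₂ + y₂ ∨ g = x₂ + y₂ ∨ g = (x₂ + y₂) + (x₂ + y₂))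

private noncomputable instance (x₁ y₁ x₂ y₂ : G3) : Decidable (bodyP x₁ y₁ x₂ y₂) := by
  unfold bodyP; infer_instance

set_option maxHeartbeats 4000000 in
private lemma key : ∀ x₁ y₁ x₂ y₂ : G3, bodyP x₁ y₁ x₂ y₂ := by decide

private lemma mem_ASigma {x y g : G3}
    (h : g = x ∨ g = x + x ∨ g = y ∨ g = y + y ∨ g = x + y ∨ g = (x + y) + (x + y)) :
    g ∈ ASigma x y := by
  rcases h with h | h | h | h | rfl | h
  · exact Or.inl (Or.inl ⟨1, (one_smul ℤ x).trans h.symm⟩)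
  · exact Or.inl (Or.inl ⟨2, (two_zsmul x).trans h.symm⟩)
  · exact Or.inl (Or.inr ⟨1, (one_smul ℤ y).trans h.symm⟩)
  · exact Or.inl (Or.inr ⟨2, (two_zsmul y).trans h.symm⟩)
  · exact Or.inr (AddSubgroup.mem_zmultiples (x + y))
  · exact Or.inr ⟨2, (two_zsmul (x + y)).trans h.symm⟩

theorem stmt3 (x₁ y₁ x₂ y₂ : ZMod 3 × ZMod 3)
    (h₁ : AddSubgroup.closure {x₁, y₁} = ⊤)
    (h₂ : AddSubgroup.closure {x₂, y₂} = ⊤) :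
    ∃ g : ZMod 3 × ZMod 3, g ≠ 0 ∧ g ∈ ASigma x₁ y₁ ∩ ASigma x₂ y₂ := by
  obtain ⟨g, hg0, hA, hB⟩ := key x₁ y₁ x₂ y₂ (genP_of_closure h₁) (genP_of_closure h₂)
  exact ⟨g, hg0, mem_ASigma hA, mem_ASigma hB⟩
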